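/- Fix δ ∈ (0, 1/2). Let J be an interval, g : J → ℝ continuous with g > 0 on J, and h : J → ℝ Lipschitz with Lipschitz constant L ≥ 0. Let X, Y : [δ, 1−δ] → J be continuously differentiable with X′(t) = g(X(t)), Y′(t) = h(Y(t)) for all t, and X(δ) = Y(δ). Suppose a ≥ 0 is such that | ∫_{X(δ)}^{X(t)} (g(u) − h(u)) / g(u) du | ≤ a for all t ∈ [δ, 1−δ]. Then sup_{t ∈ [δ,1−δ]} |X(t) − Y(t)| ≤ a · e^{L(1−2δ)}. -/

import Mathlib

open MeasureTheory Set

/-- Lemma A.1 (path bound): if `X' = g ∘ X`, `Y' = h ∘ Y` with `X(δ) = Y(δ)`, `h` Lipschitz with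
constant `L`, and the integrated relative error `|∫_{X(δ)}^{X(t)} (g-h)/g du| ≤ a` for all `t`,
then `sup_t |X(t) - Y(t)| ≤ a e^{L(1-2δ)}`. -/
theorem stmt_8
    (δ : ℝ) (hδ : δ ∈ Ioo (0:ℝ) (1/2))
    (J : Set ℝ) (hJ : J.OrdConnected)
    (g h : ℝ → ℝ) (hg : ContinuousOn g J) (hgpos : ∀ x ∈ J, 0 < g x)
    (L : ℝ) (hL : 0 ≤ L)
    (hLip : ∀ x ∈ J, ∀ y ∈ J, |h x - h y| ≤ L * |x - y|)
    (X Y : ℝ → ℝ)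
    (hXmap : ∀ t ∈ Icc δ (1 - δ), X t ∈ J) (hYmap : ∀ t ∈ Icc δ (1 - δ), Y t ∈ J)
    (hX : ∀ t ∈ Icc δ (1 - δ), HasDerivWithinAt X (g (X t)) (Icc δ (1 - δ)) t)
    (hY : ∀ t ∈ Icc δ (1 - δ), HasDerivWithinAt Y (h (Y t)) (Icc δ (1 - δ)) t)
    (hinit : X δ = Y δ)
    (a : ℝ) (ha : 0 ≤ a)
    (hbound : ∀ t ∈ Icc δ (1 - δ), |∫ u in (X δ)..(X t), (g u - h u) / g u| ≤ a) :
    ∀ t ∈ Icc δ (1 - δ), |X t - Y t| ≤ a * Real.exp (L * (1 - 2 * δ)) := by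
  obtain ⟨hδ0, hδhalf⟩ := hδ
  have hδlt : δ < 1 - δ := by linarith
  set S : Set ℝ := Icc δ (1 - δ) with hS
  have hXc : ContinuousOn X S := fun t ht => (hX t ht).continuousWithinAt
  have hYc : ContinuousOn Y S := fun t ht => (hY t ht).continuousWithinAt
  have hhc : ContinuousOn h J := by
    have hl : LipschitzOnWith L.toNNReal h J := by
      rw [lipschitzOnWith_iff_dist_le_mul]
      intro x hx y hy
      rw [Real.dist_eq, Real.dist_eq, Real.coe_toNNReal L hL]
      exact hLip x hx y hy
    exact hl.continuousOn
  set φ : ℝ → ℝ := fun u => (g u - h u) / g u with hφ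
  have hφc : ContinuousOn φ J :=
    (hg.sub hhc).div hg (fun x hx => (hgpos x hx).ne')
  set f : ℝ → ℝ := fun s => g (X s) - h (X s) with hf
  have hfc : ContinuousOn f S :=
    (hg.comp hXc (fun s hs => hXmap s hs)).sub (hhc.comp hXc (fun s hs => hXmap s hs))
  -- substitution: the integrated relative error equals ∫ s in δ..t, f s
  set ψ : ℝ → ℝ := fun t => ∫ s in δ..t, f s with hψdef
  have hsub : ∀ t ∈ S, ψ t = ∫ u in (X δ)..(X t), φ u := by
    intro t ht
    have huS : uIcc δ t ⊆ S := by
      rw [uIcc_of_le ht.1]; exact Icc_subset_Icc le_rfl ht.2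
    have key := intervalIntegral.integral_comp_smul_deriv''
      (f := X) (f' := fun s => g (X s)) (g := φ) (a := δ) (b := t)
      (hXc.mono huS)
      (by
        intro x hx
        rw [min_eq_left ht.1, max_eq_right ht.1] at hx
        have hxS : x ∈ S := ⟨hx.1.le, hx.2.le.trans ht.2⟩
        exact (hX x hxS).mono_of_mem_nhdsWithin
          (Icc_mem_nhdsGT_of_mem ⟨hx.1.le, lt_of_lt_of_le hx.2 ht.2⟩))
      ((hg.comp hXc (fun s hs => hXmap s hs)).mono huS)
      (hφc.mono (fun u hu => by
        obtain ⟨s, hs, rfl⟩ := hu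
        exact hXmap s (huS hs)))
    rw [← key]
    apply intervalIntegral.integral_congr
    intro s hs
    have hsJ : X s ∈ J := hXmap s (huS hs)
    have hne := (hgpos _ hsJ).ne'
    simp only [smul_eq_mul, Function.comp, hφ, hf]
    field_simp
  have hψbound : ∀ t ∈ S, |ψ t| ≤ a := by
    intro t ht; rw [hsub t ht]; exact hbound t ht
  -- continuity and one-sided derivative of ψ
  have hfint : ∀ t ∈ S, IntervalIntegrable f volume δ t := by
    intro t ht
    apply ContinuousOn.intervalIntegrable
    apply hfc.mono
    rw [uIcc_of_le ht.1]; exact Icc_subset_Icc le_rfl ht.2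
  have hψc : ContinuousOn ψ S := by
    have := intervalIntegral.continuousOn_primitive_interval
      (f := f) (μ := volume) (a := δ) (b := 1 - δ)
      (by
        apply (hfc.mono _).integrableOn_compact (by rw [uIcc_of_le hδlt.le]; exact isCompact_Icc)
        rw [uIcc_of_le hδlt.le])
    rwa [uIcc_of_le hδlt.le] at this
  have hψderiv : ∀ t ∈ Ico δ (1 - δ), HasDerivWithinAt ψ (f t) (Ici t) t := by
    intro t ht
    have hmem : S ∈ nhdsWithin t (Ioi t) := Icc_mem_nhdsGT_of_mem ⟨ht.1, ht.2⟩
    exact intervalIntegral.integral_hasDerivWithinAt_right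
      (hfint t ⟨ht.1, ht.2.le⟩)
      ⟨S, hmem, hfc.aestronglyMeasurable measurableSet_Icc⟩
      ((hfc t ⟨ht.1, ht.2.le⟩).mono_of_mem_nhdsWithin hmem)
  -- Gronwall
  set W : ℝ → ℝ := fun t => X t - Y t - ψ t with hW
  have hWc : ContinuousOn W S := (hXc.sub hYc).sub hψc
  have hWδ : W δ = 0 := by
    simp [hW, hψdef, hinit, intervalIntegral.integral_same]
  have hWderiv : ∀ t ∈ Ico δ (1 - δ),
      HasDerivWithinAt W (h (X t) - h (Y t)) (Ici t) t := by
    intro t ht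
    have htS : t ∈ S := ⟨ht.1, ht.2.le⟩
    have hmem : S ∈ nhdsWithin t (Ici t) := Icc_mem_nhdsGE_of_mem ⟨ht.1, ht.2⟩
    have hd : HasDerivWithinAt W (g (X t) - h (Y t) - f t) (Ici t) t :=
      (((hX t htS).mono_of_mem_nhdsWithin hmem).sub ((hY t htS).mono_of_mem_nhdsWithin hmem)).sub
        (hψderiv t ht)
    have : g (X t) - h (Y t) - f t = h (X t) - h (Y t) := by simp only [hf]; ring
    rwa [this] at hd
  have hWbound : ∀ t ∈ Ico δ (1 - δ),
      ‖h (X t) - h (Y t)‖ ≤ L * ‖W t‖ + L * a := by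
    intro t ht
    have htS : t ∈ S := ⟨ht.1, ht.2.le⟩
    have h1 : |h (X t) - h (Y t)| ≤ L * |X t - Y t| :=
      hLip _ (hXmap t htS) _ (hYmap t htS)
    have h2 : |X t - Y t| ≤ |W t| + |ψ t| := by
      have : X t - Y t = W t + ψ t := by simp [hW]
      rw [this]; exact abs_add_le _ _
    have h3 : |X t - Y t| ≤ |W t| + a :=
      h2.trans (by linarith [hψbound t htS])
    calc ‖h (X t) - h (Y t)‖ = |h (X t) - h (Y t)| := rfl
      _ ≤ L * |X t - Y t| := h1
      _ ≤ L * (|W t| + a) := by nlinarith [abs_nonneg (X t - Y t)]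
      _ = L * ‖W t‖ + L * a := by rw [Real.norm_eq_abs]; ring
  have hgron := norm_le_gronwallBound_of_norm_deriv_right_le
    (f := W) (f' := fun t => h (X t) - h (Y t)) (δ := (0:ℝ)) (K := L) (ε := L * a)
    (a := δ) (b := 1 - δ) hWc hWderiv (by rw [hWδ]; simp) hWbound
  -- compute the Gronwall bound
  have hgb : ∀ x : ℝ, 0 ≤ x → gronwallBound 0 L (L * a) x ≤ a * (Real.exp (L * x) - 1) := by
    intro x hx
    rcases eq_or_ne L 0 with hL0 | hL0
    · simp [hL0, gronwallBound_K0]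
    · rw [gronwallBound_of_K_ne_0 hL0]
      have hLa : L * a / L = a := by field_simp
      simp only [hLa, zero_mul, zero_add, le_refl]
  intro t ht
  have hWt : ‖W t‖ ≤ a * (Real.exp (L * (t - δ)) - 1) :=
    (hgron t ht).trans (hgb (t - δ) (by linarith [ht.1]))
  have hψt := hψbound t ht
  have hdecomp : X t - Y t = W t + ψ t := by simp [hW]
  have h4 : |X t - Y t| ≤ a * Real.exp (L * (t - δ)) := by
    rw [hdecomp]
    calc |W t + ψ t| ≤ |W t| + |ψ t| := abs_add_le _ _
      _ ≤ a * (Real.exp (L * (t - δ)) - 1) + a := add_le_add hWt hψt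
      _ = a * Real.exp (L * (t - δ)) := by ring
  refine h4.trans ?_
  have hexp : Real.exp (L * (t - δ)) ≤ Real.exp (L * (1 - 2 * δ)) := by
    apply Real.exp_le_exp.mpr
    have : t - δ ≤ 1 - 2 * δ := by linarith [ht.2]
    nlinarith
  nlinarith [Real.exp_pos (L * (t - δ))]
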